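/- Apply the generalized CNOT U: |j,k⟩ ↦ |j, j⊕₃k⟩ on ℂ³⊗ℂ³ to the nine-state Bennett basis (as in the previous statement, where the first factor is control). Then the images of the first five states |ψ₁⟩,…,|ψ₅⟩ remain product states, while the images of |ψ₆⟩,…,|ψ₉⟩ are each entangled with entanglement entropy 1; hence the average entanglement entropy of the transformed equiprobable ensemble equals 4/9. -/

import Mathlib

noncomputable section

def ket {d : ℕ} (i : Fin d) : Fin d → ℂ := fun x => if x = i then 1 else 0

def tens {d₁ d₂ : ℕ} (u : Fin d₁ → ℂ) (v : Fin d₂ → ℂ) : Fin d₁ × Fin d₂ → ℂ :=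
  fun p => u p.1 * v p.2

def dens {n : Type*} (ψ : n → ℂ) : Matrix n n ℂ := Matrix.of fun x y => ψ x * star (ψ y)

def trSnd {d₁ d₂ : ℕ} (ρ : Matrix (Fin d₁ × Fin d₂) (Fin d₁ × Fin d₂) ℂ) :
    Matrix (Fin d₁) (Fin d₁) ℂ := Matrix.of fun j j' => ∑ k, ρ (j, k) (j', k)

def SvN {n : Type*} [Fintype n] [DecidableEq n] (ρ : Matrix n n ℂ) : ℝ :=
  if h : ρ.IsHermitian then -∑ i, h.eigenvalues i * Real.logb 2 (h.eigenvalues i) else 0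

/-- Entanglement entropy of a pure state of `ℂ³⊗ℂ³`. -/
def entEnt (ψ : Fin 3 × Fin 3 → ℂ) : ℝ := SvN (trSnd (dens ψ))

def pm (i j : Fin 3) (s : ℂ) : Fin 3 → ℂ := fun x =>
  if x = i then (Real.sqrt 2 : ℂ)⁻¹ else if x = j then s * (Real.sqrt 2 : ℂ)⁻¹ else 0

/-- The nine-state Bennett basis of `ℂ³⊗ℂ³`. -/
def bennett : Fin 9 → (Fin 3 × Fin 3 → ℂ) :=
  ![tens (ket 1) (ket 1),
    tens (ket 0) (pm 0 1 1), tens (ket 0) (pm 0 1 (-1)),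
    tens (ket 2) (pm 1 2 1), tens (ket 2) (pm 1 2 (-1)),
    tens (pm 1 2 1) (ket 0), tens (pm 1 2 (-1)) (ket 0),
    tens (pm 0 1 1) (ket 2), tens (pm 0 1 (-1)) (ket 2)]

/-- The generalized CNOT `|j,k⟩ ↦ |j, j⊕₃k⟩` on two qutrits (first factor is control). -/
def gcnot3 (ψ : Fin 3 × Fin 3 → ℂ) : Fin 3 × Fin 3 → ℂ := fun p => ψ (p.1, p.2 - p.1)

/-! ### Auxiliary lemmas -/

open Matrix

lemma sqrt2_sq : ((Real.sqrt 2 : ℝ) : ℂ) * ((Real.sqrt 2 : ℝ) : ℂ) = 2 := by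
  norm_cast
  exact Real.mul_self_sqrt (by norm_num)

lemma sqrt2_ne : ((Real.sqrt 2 : ℝ) : ℂ) ≠ 0 := by
  intro h
  have h2 : ((Real.sqrt 2 : ℝ) : ℂ) * ((Real.sqrt 2 : ℝ) : ℂ) = 0 := by rw [h]; ring
  rw [sqrt2_sq] at h2; norm_num at h2

lemma r_ne : ((Real.sqrt 2 : ℝ) : ℂ)⁻¹ ≠ 0 := inv_ne_zero sqrt2_ne

lemma sqrt2_inv : ((Real.sqrt 2 : ℝ) : ℂ)⁻¹ * ((Real.sqrt 2 : ℝ) : ℂ)⁻¹ = 2⁻¹ := by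
  rw [← mul_inv, sqrt2_sq]

lemma trace_eq_sum_eig {n : Type*} [Fintype n] [DecidableEq n] {A : Matrix n n ℂ}
    (hA : A.IsHermitian) : A.trace = ∑ i, (hA.eigenvalues i : ℂ) := by
  conv_lhs => rw [hA.spectral_theorem]
  rw [Unitary.conjStarAlgAut_apply]
  rw [Matrix.trace_mul_cycle]
  rw [show (star (hA.eigenvectorUnitary : Matrix n n ℂ)) * (hA.eigenvectorUnitary : Matrix n n ℂ) = 1 from
    Matrix.UnitaryGroup.star_mul_self _]
  simp [Matrix.trace_diagonal]

lemma eig_zero_or {n : Type*} [Fintype n] [DecidableEq n] {A : Matrix n n ℂ}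
    (hA : A.IsHermitian) (c : ℝ) (hc : A * A = (c : ℂ) • A) (i : n) :
    hA.eigenvalues i = 0 ∨ hA.eigenvalues i = c := by
  set v : n → ℂ := ⇑(hA.eigenvectorBasis i) with hvdef
  have hv : A *ᵥ v = ((hA.eigenvalues i : ℝ) : ℂ) • v := by
    have h := hA.mulVec_eigenvectorBasis i
    rw [RCLike.real_smul_eq_coe_smul (K := ℂ)] at h
    exact h
  have hvne : v ≠ 0 := by
    have h0 := hA.eigenvectorBasis.orthonormal.ne_zero i
    intro h; apply h0; ext j; exact congrFun h j
  set l : ℂ := ((hA.eigenvalues i : ℝ) : ℂ) with hldef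
  have h1 : (A * A) *ᵥ v = (l * l) • v := by
    rw [← Matrix.mulVec_mulVec, hv, Matrix.mulVec_smul, hv, smul_smul]
  have h2 : (A * A) *ᵥ v = ((c : ℂ) * l) • v := by
    rw [hc, Matrix.smul_mulVec, hv, smul_smul]
  have h3 : (l * l - (c : ℂ) * l) • v = 0 := by
    rw [sub_smul, ← h1, ← h2, sub_self]
  rcases smul_eq_zero.mp h3 with h | h
  · have hr : l * (l - (c : ℂ)) = 0 := by ring_nf; ring_nf at h; linear_combination h
    rcases mul_eq_zero.mp hr with h' | h'
    · left; rw [hldef] at h'; exact_mod_cast h'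
    · right; have hlc : l = (c : ℂ) := by linear_combination h'
      rw [hldef] at hlc; exact_mod_cast hlc
  · exact absurd h hvne

lemma SvN_proj {n : Type*} [Fintype n] [DecidableEq n] {ρ : Matrix n n ℂ}
    (h : ρ.IsHermitian) (hc : ρ * ρ = ρ) : SvN ρ = 0 := by
  rw [SvN, dif_pos h]
  have hz : ∀ i, h.eigenvalues i * Real.logb 2 (h.eigenvalues i) = 0 := by
    intro i
    rcases eig_zero_or h 1 (by simpa using hc) i with h' | h' <;> simp [h']
  simp [hz]

lemma SvN_half {n : Type*} [Fintype n] [DecidableEq n] {ρ : Matrix n n ℂ}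
    (h : ρ.IsHermitian) (hc : ρ * ρ = ((2 : ℂ))⁻¹ • ρ) (ht : ρ.trace = 1) : SvN ρ = 1 := by
  rw [SvN, dif_pos h]
  have hev : ∀ i, h.eigenvalues i * Real.logb 2 (h.eigenvalues i) = - h.eigenvalues i := by
    intro i
    rcases eig_zero_or h (2 : ℝ)⁻¹ (by push_cast at hc ⊢; exact hc) i with h' | h' <;>
      rw [h']
    · simp
    · rw [Real.logb_inv, Real.logb_self_eq_one (by norm_num)]; ring
  simp only [hev, Finset.sum_neg_distrib, neg_neg]
  have htr := trace_eq_sum_eig h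
  rw [ht] at htr
  have h2 : ((∑ i, h.eigenvalues i : ℝ) : ℂ) = 1 := by push_cast; rw [← htr]
  exact_mod_cast h2

lemma SvN_diag_proj (d : Fin 3 → ℂ) (h0 : ∀ i, d i = 0 ∨ d i = 1) :
    SvN (Matrix.diagonal d) = 0 := by
  have hsa : IsSelfAdjoint d := by
    funext i; rcases h0 i with h | h <;> simp [Pi.star_apply, h]
  apply SvN_proj (Matrix.isHermitian_diagonal_of_self_adjoint d hsa)
  rw [Matrix.diagonal_mul_diagonal]
  have hd : (fun i => d i * d i) = d := by
    funext i; rcases h0 i with h | h <;> rw [h] <;> ring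
  rw [hd]

lemma SvN_diag_half (d : Fin 3 → ℂ) (h0 : ∀ i, d i = 0 ∨ d i = 2⁻¹)
    (hs : ∑ i, d i = 1) : SvN (Matrix.diagonal d) = 1 := by
  have hsa : IsSelfAdjoint d := by
    funext i; rcases h0 i with h | h <;> simp [Pi.star_apply, h]
  apply SvN_half (Matrix.isHermitian_diagonal_of_self_adjoint d hsa)
  · rw [Matrix.diagonal_mul_diagonal, ← Matrix.diagonal_smul]
    have hd : (fun i => d i * d i) = (2 : ℂ)⁻¹ • d := by
      funext i
      rcases h0 i with h | h <;> rw [Pi.smul_apply, h, smul_eq_mul] <;> norm_num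
    rw [hd]
  · rw [Matrix.trace_diagonal]; exact hs


lemma bdef0 : bennett 0 = tens (ket 1) (ket 1) := rfl
lemma bdef1 : bennett 1 = tens (ket 0) (pm 0 1 1) := rfl
lemma bdef2 : bennett 2 = tens (ket 0) (pm 0 1 (-1)) := rfl
lemma bdef3 : bennett 3 = tens (ket 2) (pm 1 2 1) := rfl
lemma bdef4 : bennett 4 = tens (ket 2) (pm 1 2 (-1)) := rfl
lemma bdef5 : bennett 5 = tens (pm 1 2 1) (ket 0) := rfl
lemma bdef6 : bennett 6 = tens (pm 1 2 (-1)) (ket 0) := rfl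
lemma bdef7 : bennett 7 = tens (pm 0 1 1) (ket 2) := rfl
lemma bdef8 : bennett 8 = tens (pm 0 1 (-1)) (ket 2) := rfl

lemma fs00 : (0 : Fin 3) - 0 = 0 := rfl
lemma fs10 : (1 : Fin 3) - 0 = 1 := rfl
lemma fs20 : (2 : Fin 3) - 0 = 2 := rfl
lemma fs01 : (0 : Fin 3) - 1 = 2 := rfl
lemma fs11 : (1 : Fin 3) - 1 = 0 := rfl
lemma fs21 : (2 : Fin 3) - 1 = 1 := rfl
lemma fs02 : (0 : Fin 3) - 2 = 1 := rfl
lemma fs12 : (1 : Fin 3) - 2 = 2 := rfl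
lemma fs22 : (2 : Fin 3) - 2 = 0 := rfl
lemma fn1 : (-1 : Fin 3) = 2 := rfl
lemma fn2 : (-2 : Fin 3) = 1 := rfl

/-! ### Computations of the reduced density matrices -/

lemma rho0 : trSnd (dens (gcnot3 (bennett 0))) = Matrix.diagonal ![0, 1, 0] := by
  rw [bdef0]
  ext j j'
  fin_cases j <;> fin_cases j' <;>
    simp [trSnd, dens, gcnot3, tens, ket, pm, Fin.sum_univ_three, Matrix.diagonal, sqrt2_inv,
      fs00, fs10, fs20, fs01, fs11, fs21, fs02, fs12, fs22, fn1, fn2] <;>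
    (first | norm_num | decide)

lemma rho1 : trSnd (dens (gcnot3 (bennett 1))) = Matrix.diagonal ![1, 0, 0] := by
  rw [bdef1]
  ext j j'
  fin_cases j <;> fin_cases j' <;>
    simp [trSnd, dens, gcnot3, tens, ket, pm, Fin.sum_univ_three, Matrix.diagonal, sqrt2_inv,
      fs00, fs10, fs20, fs01, fs11, fs21, fs02, fs12, fs22, fn1, fn2] <;>
    (first | norm_num | decide)

lemma rho2 : trSnd (dens (gcnot3 (bennett 2))) = Matrix.diagonal ![1, 0, 0] := by
  rw [bdef2]
  ext j j'
  fin_cases j <;> fin_cases j' <;>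
    simp [trSnd, dens, gcnot3, tens, ket, pm, Fin.sum_univ_three, Matrix.diagonal, sqrt2_inv,
      fs00, fs10, fs20, fs01, fs11, fs21, fs02, fs12, fs22, fn1, fn2] <;>
    (first | norm_num | decide)

lemma rho3 : trSnd (dens (gcnot3 (bennett 3))) = Matrix.diagonal ![0, 0, 1] := by
  rw [bdef3]
  ext j j'
  fin_cases j <;> fin_cases j' <;>
    simp [trSnd, dens, gcnot3, tens, ket, pm, Fin.sum_univ_three, Matrix.diagonal, sqrt2_inv,
      fs00, fs10, fs20, fs01, fs11, fs21, fs02, fs12, fs22, fn1, fn2] <;>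
    (first | norm_num | decide)

lemma rho4 : trSnd (dens (gcnot3 (bennett 4))) = Matrix.diagonal ![0, 0, 1] := by
  rw [bdef4]
  ext j j'
  fin_cases j <;> fin_cases j' <;>
    simp [trSnd, dens, gcnot3, tens, ket, pm, Fin.sum_univ_three, Matrix.diagonal, sqrt2_inv,
      fs00, fs10, fs20, fs01, fs11, fs21, fs02, fs12, fs22, fn1, fn2] <;>
    (first | norm_num | decide)

lemma rho5 : trSnd (dens (gcnot3 (bennett 5))) = Matrix.diagonal ![0, 2⁻¹, 2⁻¹] := by
  rw [bdef5]
  ext j j'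
  fin_cases j <;> fin_cases j' <;>
    simp [trSnd, dens, gcnot3, tens, ket, pm, Fin.sum_univ_three, Matrix.diagonal, sqrt2_inv,
      fs00, fs10, fs20, fs01, fs11, fs21, fs02, fs12, fs22, fn1, fn2] <;>
    (first | norm_num | decide)

lemma rho6 : trSnd (dens (gcnot3 (bennett 6))) = Matrix.diagonal ![0, 2⁻¹, 2⁻¹] := by
  rw [bdef6]
  ext j j'
  fin_cases j <;> fin_cases j' <;>
    simp [trSnd, dens, gcnot3, tens, ket, pm, Fin.sum_univ_three, Matrix.diagonal, sqrt2_inv,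
      fs00, fs10, fs20, fs01, fs11, fs21, fs02, fs12, fs22, fn1, fn2] <;>
    (first | norm_num | decide)

lemma rho7 : trSnd (dens (gcnot3 (bennett 7))) = Matrix.diagonal ![2⁻¹, 2⁻¹, 0] := by
  rw [bdef7]
  ext j j'
  fin_cases j <;> fin_cases j' <;>
    simp [trSnd, dens, gcnot3, tens, ket, pm, Fin.sum_univ_three, Matrix.diagonal, sqrt2_inv,
      fs00, fs10, fs20, fs01, fs11, fs21, fs02, fs12, fs22, fn1, fn2] <;>
    (first | norm_num | decide)

lemma rho8 : trSnd (dens (gcnot3 (bennett 8))) = Matrix.diagonal ![2⁻¹, 2⁻¹, 0] := by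
  rw [bdef8]
  ext j j'
  fin_cases j <;> fin_cases j' <;>
    simp [trSnd, dens, gcnot3, tens, ket, pm, Fin.sum_univ_three, Matrix.diagonal, sqrt2_inv,
      fs00, fs10, fs20, fs01, fs11, fs21, fs02, fs12, fs22, fn1, fn2] <;>
    (first | norm_num | decide)

lemma ee0 : entEnt (gcnot3 (bennett 0)) = 0 := by
  rw [entEnt, rho0]; apply SvN_diag_proj; intro i; fin_cases i <;> norm_num
lemma ee1 : entEnt (gcnot3 (bennett 1)) = 0 := by
  rw [entEnt, rho1]; apply SvN_diag_proj; intro i; fin_cases i <;> norm_num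
lemma ee2 : entEnt (gcnot3 (bennett 2)) = 0 := by
  rw [entEnt, rho2]; apply SvN_diag_proj; intro i; fin_cases i <;> norm_num
lemma ee3 : entEnt (gcnot3 (bennett 3)) = 0 := by
  rw [entEnt, rho3]; apply SvN_diag_proj; intro i; fin_cases i <;> norm_num
lemma ee4 : entEnt (gcnot3 (bennett 4)) = 0 := by
  rw [entEnt, rho4]; apply SvN_diag_proj; intro i; fin_cases i <;> norm_num
lemma ee5 : entEnt (gcnot3 (bennett 5)) = 1 := by
  rw [entEnt, rho5]; apply SvN_diag_half
  · intro i; fin_cases i <;> norm_num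
  · simp [Fin.sum_univ_three]; norm_num
lemma ee6 : entEnt (gcnot3 (bennett 6)) = 1 := by
  rw [entEnt, rho6]; apply SvN_diag_half
  · intro i; fin_cases i <;> norm_num
  · simp [Fin.sum_univ_three]; norm_num
lemma ee7 : entEnt (gcnot3 (bennett 7)) = 1 := by
  rw [entEnt, rho7]; apply SvN_diag_half
  · intro i; fin_cases i <;> norm_num
  · simp [Fin.sum_univ_three]; norm_num
lemma ee8 : entEnt (gcnot3 (bennett 8)) = 1 := by
  rw [entEnt, rho8]; apply SvN_diag_half
  · intro i; fin_cases i <;> norm_num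
  · simp [Fin.sum_univ_three]; norm_num

/-! ### Product forms of the first five images -/

lemma prod0 : gcnot3 (bennett 0) = tens (ket 1) (ket 2) := by
  funext p; obtain ⟨a, b⟩ := p
  fin_cases a <;> fin_cases b <;>
    simp [gcnot3, bennett, tens, ket, pm,
      fs00, fs10, fs20, fs01, fs11, fs21, fs02, fs12, fs22, fn1, fn2] <;>
    first | rfl | decide
lemma prod1 : gcnot3 (bennett 1) = tens (ket 0) (pm 0 1 1) := by
  funext p; obtain ⟨a, b⟩ := p
  fin_cases a <;> fin_cases b <;>
    simp [gcnot3, bennett, tens, ket, pm,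
      fs00, fs10, fs20, fs01, fs11, fs21, fs02, fs12, fs22, fn1, fn2] <;>
    first | rfl | decide
lemma prod2 : gcnot3 (bennett 2) = tens (ket 0) (pm 0 1 (-1)) := by
  funext p; obtain ⟨a, b⟩ := p
  fin_cases a <;> fin_cases b <;>
    simp [gcnot3, bennett, tens, ket, pm,
      fs00, fs10, fs20, fs01, fs11, fs21, fs02, fs12, fs22, fn1, fn2] <;>
    first | rfl | decide
lemma prod3 : gcnot3 (bennett 3) = tens (ket 2) (pm 0 1 1) := by
  funext p; obtain ⟨a, b⟩ := p
  fin_cases a <;> fin_cases b <;>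
    simp [gcnot3, bennett, tens, ket, pm,
      fs00, fs10, fs20, fs01, fs11, fs21, fs02, fs12, fs22, fn1, fn2] <;>
    first | rfl | decide
lemma prod4 : gcnot3 (bennett 4) = tens (ket 2) (pm 0 1 (-1)) := by
  funext p; obtain ⟨a, b⟩ := p
  fin_cases a <;> fin_cases b <;>
    simp [gcnot3, bennett, tens, ket, pm,
      fs00, fs10, fs20, fs01, fs11, fs21, fs02, fs12, fs22, fn1, fn2] <;>
    first | rfl | decide

/-! ### Non-product proofs for the last four images -/

lemma notprod_aux (ψ : Fin 3 × Fin 3 → ℂ) (a a' : Fin 3) (b b' : Fin 3)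
    (h1 : ψ (a, b) ≠ 0) (h2 : ψ (a', b') ≠ 0) (h3 : ψ (a, b') = 0) :
    ¬ ∃ u v : Fin 3 → ℂ, ψ = tens u v := by
  rintro ⟨u, v, rfl⟩
  simp only [tens] at h1 h2 h3
  rcases mul_eq_zero.mp h3 with h | h
  · exact h1 (by simp [h])
  · exact h2 (by simp [h])

lemma val56 (s : ℂ) : gcnot3 (tens (pm 1 2 s) (ket 0)) (1, 1) = (Real.sqrt 2 : ℂ)⁻¹ ∧
    gcnot3 (tens (pm 1 2 s) (ket 0)) (2, 2) = s * (Real.sqrt 2 : ℂ)⁻¹ ∧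
    gcnot3 (tens (pm 1 2 s) (ket 0)) (1, 2) = 0 := by
  refine ⟨?_, ?_, ?_⟩ <;>
    simp [gcnot3, tens, pm, ket,
      fs00, fs10, fs20, fs01, fs11, fs21, fs02, fs12, fs22, fn1, fn2]

lemma val78 (s : ℂ) : gcnot3 (tens (pm 0 1 s) (ket 2)) (0, 2) = (Real.sqrt 2 : ℂ)⁻¹ ∧
    gcnot3 (tens (pm 0 1 s) (ket 2)) (1, 0) = s * (Real.sqrt 2 : ℂ)⁻¹ ∧
    gcnot3 (tens (pm 0 1 s) (ket 2)) (0, 0) = 0 := by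
  refine ⟨?_, ?_, ?_⟩ <;>
    simp [gcnot3, tens, pm, ket,
      fs00, fs10, fs20, fs01, fs11, fs21, fs02, fs12, fs22, fn1, fn2]

lemma s_ne (s : ℂ) (hs : s = 1 ∨ s = -1) : s * (Real.sqrt 2 : ℂ)⁻¹ ≠ 0 := by
  rcases hs with h | h <;> rw [h] <;> simpa using r_ne

/-! ### Main theorem -/

/-- Under the qutrit CNOT, the first five Bennett states stay product states, the last four
become entangled each with entanglement entropy `1`, and the average entanglement entropy
of the transformed equiprobable ensemble is `4/9`. -/
theorem gcnot3_on_bennett_basis :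
    (∀ i : Fin 9, (i : ℕ) < 5 → ∃ u v : Fin 3 → ℂ, gcnot3 (bennett i) = tens u v) ∧
    (∀ i : Fin 9, 5 ≤ (i : ℕ) →
      (¬ ∃ u v : Fin 3 → ℂ, gcnot3 (bennett i) = tens u v) ∧ entEnt (gcnot3 (bennett i)) = 1) ∧
    (∑ i : Fin 9, entEnt (gcnot3 (bennett i))) / 9 = 4 / 9 := by
  refine ⟨?_, ?_, ?_⟩
  · intro i hi
    fin_cases i
    · exact ⟨_, _, prod0⟩
    · exact ⟨_, _, prod1⟩
    · exact ⟨_, _, prod2⟩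
    · exact ⟨_, _, prod3⟩
    · exact ⟨_, _, prod4⟩
    all_goals simp at hi
  · intro i hi
    fin_cases i
    any_goals simp at hi
    · obtain ⟨h1, h2, h3⟩ := val56 1
      exact ⟨notprod_aux _ 1 2 1 2 (h1 ▸ r_ne) (h2 ▸ s_ne 1 (Or.inl rfl)) h3, ee5⟩
    · obtain ⟨h1, h2, h3⟩ := val56 (-1)
      exact ⟨notprod_aux _ 1 2 1 2 (h1 ▸ r_ne) (h2 ▸ s_ne (-1) (Or.inr rfl)) h3, ee6⟩
    · obtain ⟨h1, h2, h3⟩ := val78 1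
      exact ⟨notprod_aux _ 0 1 2 0 (h1 ▸ r_ne) (h2 ▸ s_ne 1 (Or.inl rfl)) h3, ee7⟩
    · obtain ⟨h1, h2, h3⟩ := val78 (-1)
      exact ⟨notprod_aux _ 0 1 2 0 (h1 ▸ r_ne) (h2 ▸ s_ne (-1) (Or.inr rfl)) h3, ee8⟩
  · have hsum : ∑ i : Fin 9, entEnt (gcnot3 (bennett i)) =
        entEnt (gcnot3 (bennett 0)) + (entEnt (gcnot3 (bennett 1)) +
        (entEnt (gcnot3 (bennett 2)) + (entEnt (gcnot3 (bennett 3)) +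
        (entEnt (gcnot3 (bennett 4)) + (entEnt (gcnot3 (bennett 5)) +
        (entEnt (gcnot3 (bennett 6)) + (entEnt (gcnot3 (bennett 7)) +
        entEnt (gcnot3 (bennett 8))))))))) := by
      simp only [Fin.sum_univ_succ, Fin.sum_univ_zero, add_zero]
      rfl
    rw [hsum, ee0, ee1, ee2, ee3, ee4, ee5, ee6, ee7, ee8]
    norm_num
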